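/- Let P : ℝ^{n} → ℝ^{n×n} be continuous with symmetric positive definite values, and suppose there are a positive non-increasing function p̲ and a non-decreasing function p̄ with p̲(|e|) I ≤ P(e) ≤ p̄(|e|) I for all e. Then for all e₁, e₂ in ℝ^{n}, the Riemannian distance satisfies √(p̲(|e₁−e₂| + |e₂|)) |e₁−e₂| ≤ d_P(e₁, e₂) ≤ √(p̄(|e₁−e₂| + |e₂|)) |e₁−e₂|. -/

import Mathlib

open Real Set Filter
open scoped RealInnerProductSpace Topology

/-- Euclidean state space ℝⁿ. -/
abbrev Euc (n : ℕ) := EuclideanSpace ℝ (Fin n)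

/-- Riemannian length (for the metric P) of the path s ↦ γ(s), s ∈ [0,1]. -/
noncomputable def pathLength {n : ℕ} (P : Euc n → Euc n →L[ℝ] Euc n)
    (γ : ℝ → Euc n) : ℝ :=
  ∫ s in (0:ℝ)..1, Real.sqrt ⟪P (γ s) (deriv γ s), deriv γ s⟫

/-- Riemannian distance associated with the metric P: the infimum of the lengths
of C¹ paths joining the two points. -/
noncomputable def riemDist {n : ℕ} (P : Euc n → Euc n →L[ℝ] Euc n)
    (a b : Euc n) : ℝ :=
  sInf {L : ℝ | ∃ γ : ℝ → Euc n, ContDiff ℝ 1 γ ∧ γ 0 = a ∧ γ 1 = b ∧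
    L = pathLength P γ}

lemma pathLength_nonneg {n : ℕ} (P : Euc n → Euc n →L[ℝ] Euc n) (γ : ℝ → Euc n) :
    0 ≤ pathLength P γ :=
  intervalIntegral.integral_nonneg (by norm_num) (fun s _ => Real.sqrt_nonneg _)


lemma line_upper {n : ℕ} (P : Euc n → Euc n →L[ℝ] Euc n) (hP : Continuous P)
    (hPpos : ∀ (e v : Euc n), v ≠ 0 → 0 < ⟪P e v, v⟫)
    (pu : ℝ → ℝ) (hpu : MonotoneOn pu (Ici 0))
    (hPup : ∀ e v : Euc n, ⟪P e v, v⟫ ≤ pu ‖e‖ * ‖v‖ ^ 2)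
    (e1 e2 : Euc n) :
    pathLength P (fun s : ℝ => e1 + s • (e2 - e1)) ≤
      Real.sqrt (pu (‖e1 - e2‖ + ‖e2‖)) * ‖e1 - e2‖ := by
  set v := e2 - e1 with hvdef
  set γL : ℝ → Euc n := fun s : ℝ => e1 + s • v with hγLdef
  set D := ‖e1 - e2‖ with hDdef
  set R := D + ‖e2‖ with hRdef
  have hD0 : 0 ≤ D := norm_nonneg _
  have hR0 : 0 ≤ R := by positivity
  have hvD : ‖v‖ = D := by rw [hvdef, hDdef, norm_sub_rev]
  have hld : ∀ s : ℝ, HasDerivAt γL v s := by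
    intro s
    simpa [hγLdef] using ((hasDerivAt_id s).smul_const v).const_add e1
  have hderivL : ∀ s : ℝ, deriv γL s = v := fun s => (hld s).deriv
  have hγLc : Continuous γL :=
    continuous_const.add (continuous_id.smul continuous_const)
  have heq : (fun s => Real.sqrt ⟪P (γL s) (deriv γL s), deriv γL s⟫)
      = fun s => Real.sqrt ⟪P (γL s) v, v⟫ := by
    funext s; rw [hderivL s]
  have hpuR : Real.sqrt (pu R * ‖v‖ ^ 2) = Real.sqrt (pu R) * ‖v‖ := by
    rcases eq_or_ne v 0 with hv | hv
    · simp [hv]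
    · have h1 : 0 < ⟪P e1 v, v⟫ := hPpos e1 v hv
      have h2 : ⟪P e1 v, v⟫ ≤ pu ‖e1‖ * ‖v‖ ^ 2 := hPup e1 v
      have hv2 : 0 < ‖v‖ ^ 2 := by have := norm_pos_iff.mpr hv; positivity
      have h3 : 0 < pu ‖e1‖ := by nlinarith
      have he1R : ‖e1‖ ≤ R := by
        have := norm_add_le (e1 - e2) e2
        simp only [sub_add_cancel] at this
        rw [hRdef, hDdef]; linarith
      have h4 : pu ‖e1‖ ≤ pu R := hpu (mem_Ici.2 (norm_nonneg _)) (mem_Ici.2 hR0) he1R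
      rw [Real.sqrt_mul (by linarith) _, Real.sqrt_sq (norm_nonneg _)]
  have hbnd : ∀ s ∈ Icc (0:ℝ) 1,
      Real.sqrt ⟪P (γL s) v, v⟫ ≤ Real.sqrt (pu R) * ‖v‖ := by
    intro s hs
    have hnorm : ‖γL s‖ ≤ R := by
      have hsub : γL s - e2 = (1 - s) • (e1 - e2) := by
        rw [hγLdef, hvdef]
        simp only
        module
      have h1 : ‖γL s - e2‖ ≤ D := by
        rw [hsub, norm_smul]
        have : |1 - s| ≤ 1 := by
          rw [abs_le]; constructor <;> [linarith [hs.2]; linarith [hs.1]]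
        calc ‖(1:ℝ) - s‖ * ‖e1 - e2‖ ≤ 1 * ‖e1 - e2‖ := by
              apply mul_le_mul_of_nonneg_right _ (norm_nonneg _)
              rwa [Real.norm_eq_abs]
          _ = D := by rw [one_mul]
      have h2 : ‖γL s‖ ≤ ‖γL s - e2‖ + ‖e2‖ := by
        simpa using norm_add_le (γL s - e2) e2
      rw [hRdef]; linarith
    have hmono : pu ‖γL s‖ ≤ pu R := hpu (mem_Ici.2 (norm_nonneg _)) (mem_Ici.2 hR0) hnorm
    calc Real.sqrt ⟪P (γL s) v, v⟫ ≤ Real.sqrt (pu ‖γL s‖ * ‖v‖ ^ 2) :=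
          Real.sqrt_le_sqrt (hPup _ _)
      _ ≤ Real.sqrt (pu R * ‖v‖ ^ 2) :=
          Real.sqrt_le_sqrt (mul_le_mul_of_nonneg_right hmono (sq_nonneg _))
      _ = Real.sqrt (pu R) * ‖v‖ := hpuR
  have hicont : Continuous (fun s => Real.sqrt ⟪P (γL s) v, v⟫) :=
    (((hP.comp hγLc).clm_apply continuous_const).inner continuous_const).sqrt
  calc pathLength P γL = ∫ s in (0:ℝ)..1, Real.sqrt ⟪P (γL s) v, v⟫ := by
        rw [pathLength, heq]
    _ ≤ ∫ _ in (0:ℝ)..1, Real.sqrt (pu R) * ‖v‖ := by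
        apply intervalIntegral.integral_mono_on (by norm_num)
          (hicont.intervalIntegrable _ _) intervalIntegrable_const hbnd
    _ = Real.sqrt (pu R) * ‖v‖ := by simp
    _ = Real.sqrt (pu R) * D := by rw [hvD]

lemma path_length_lower {n : ℕ} (P : Euc n → Euc n →L[ℝ] Euc n) (hP : Continuous P)
    (pl : ℝ → ℝ) (hplpos : ∀ s, 0 ≤ s → 0 < pl s) (hpl : AntitoneOn pl (Ici 0))
    (hPlow : ∀ e v : Euc n, pl ‖e‖ * ‖v‖ ^ 2 ≤ ⟪P e v, v⟫)
    (e1 e2 : Euc n) (γ : ℝ → Euc n) (hγ : ContDiff ℝ 1 γ)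
    (h0 : γ 0 = e1) (h1 : γ 1 = e2) :
    Real.sqrt (pl (‖e1 - e2‖ + ‖e2‖)) * ‖e1 - e2‖ ≤ pathLength P γ := by
  set D := ‖e1 - e2‖ with hDdef
  set R := D + ‖e2‖ with hRdef
  set c := Real.sqrt (pl R) with hcdef
  have hD0 : 0 ≤ D := norm_nonneg _
  have hR0 : 0 ≤ R := by positivity
  have hc0 : 0 ≤ c := Real.sqrt_nonneg _
  rcases eq_or_lt_of_le hD0 with hD | hD
  · rw [← hD, mul_zero]; exact pathLength_nonneg P γ
  -- continuity facts
  have hγc : Continuous γ := hγ.continuous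
  have hγ' : Continuous (deriv γ) := hγ.continuous_deriv le_rfl
  have hdiff : ∀ s, HasDerivAt γ (deriv γ s) s :=
    fun s => (hγ.differentiable one_ne_zero s).hasDerivAt
  have hIcont : Continuous (fun s => Real.sqrt ⟪P (γ s) (deriv γ s), deriv γ s⟫) :=
    (((hP.comp hγc).clm_apply hγ').inner hγ').sqrt
  have key : ∀ δ : ℝ, 0 < δ → 3 * δ ≤ D ^ 2 →
      c * (Real.sqrt (D ^ 2 - δ) - Real.sqrt (2 * δ)) ≤ pathLength P γ := by
    intro δ hδ hδD
    set χ : ℝ → ℝ := fun u => max 0 (min 1 (min ((u - δ) / δ) ((D ^ 2 - u) / δ))) with hχdef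
    set ρ : ℝ → ℝ := fun u => c * χ u / (2 * Real.sqrt (max u δ)) with hρdef
    have hχcont : Continuous χ := by
      apply continuous_const.max
      exact continuous_const.min (((continuous_id.sub continuous_const).div_const δ).min
        ((continuous_const.sub continuous_id).div_const δ))
    have hχ0 : ∀ u, 0 ≤ χ u := fun u => le_max_left _ _
    have hχ1 : ∀ u, χ u ≤ 1 := fun u => max_le (by norm_num) (min_le_left _ _)
    have hχlow : ∀ u, u ≤ δ → χ u = 0 := by
      intro u hu
      have : min 1 (min ((u - δ) / δ) ((D ^ 2 - u) / δ)) ≤ 0 :=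
        (min_le_right _ _).trans ((min_le_left _ _).trans
          (by rw [div_nonpos_iff]; right; constructor <;> linarith))
      exact max_eq_left this
    have hχhigh : ∀ u, D ^ 2 ≤ u → χ u = 0 := by
      intro u hu
      have : min 1 (min ((u - δ) / δ) ((D ^ 2 - u) / δ)) ≤ 0 :=
        (min_le_right _ _).trans ((min_le_right _ _).trans
          (by rw [div_nonpos_iff]; right; constructor <;> linarith))
      exact max_eq_left this
    have hχone : ∀ u, 2 * δ ≤ u → u ≤ D ^ 2 - δ → χ u = 1 := by
      intro u hu1 hu2
      have h1 : (1:ℝ) ≤ (u - δ) / δ := (one_le_div hδ).2 (by linarith)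
      have h2 : (1:ℝ) ≤ (D ^ 2 - u) / δ := (one_le_div hδ).2 (by linarith)
      rw [hχdef]
      simp only [min_eq_left (le_min h1 h2), max_eq_right (zero_le_one)]
    have hsqpos : ∀ u : ℝ, 0 < Real.sqrt (max u δ) :=
      fun u => Real.sqrt_pos.2 (lt_of_lt_of_le hδ (le_max_right _ _))
    have hρcont : Continuous ρ := by
      apply (continuous_const.mul hχcont).div
        (continuous_const.mul ((continuous_id.max continuous_const).sqrt))
      exact fun u => (mul_pos two_pos (hsqpos u)).ne'
    have hρ0 : ∀ u, 0 ≤ ρ u := fun u =>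
      div_nonneg (mul_nonneg hc0 (hχ0 u)) (by positivity)
    have hρbound : ∀ u, ρ u * (2 * Real.sqrt u) ≤ c * χ u := by
      intro u
      rcases le_or_gt u δ with h | h
      · rw [hρdef]; simp only [hχlow u h, mul_zero, zero_div, zero_mul, mul_zero]; rfl
      · have hmax : max u δ = u := max_eq_left h.le
        have hu0 : 0 < u := hδ.trans h
        have hne : (2 * Real.sqrt u) ≠ 0 := by positivity
        rw [hρdef]
        simp only [hmax]
        rw [div_mul_eq_mul_div, mul_div_assoc, div_self hne, mul_one]
    have hsupp : ∀ u, χ u ≠ 0 → u ≤ D ^ 2 := by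
      intro u h
      by_contra hcon
      exact h (hχhigh u (le_of_not_ge fun hh => hcon (hh.trans (le_refl _))))
    set φ : ℝ → ℝ := fun t => ∫ v in (0:ℝ)..t, ρ v with hφdef
    have hφd : ∀ t, HasDerivAt φ (ρ t) t := fun t =>
      intervalIntegral.integral_hasDerivAt_right (hρcont.intervalIntegrable _ _)
        (hρcont.stronglyMeasurableAtFilter _ _) hρcont.continuousAt
    set w : ℝ → ℝ := fun s => ‖γ s - e2‖ ^ 2 with hwdef
    have hwd : ∀ s, HasDerivAt w (2 * ⟪deriv γ s, γ s - e2⟫) s := by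
      intro s
      have hd : HasDerivAt (fun s => γ s - e2) (deriv γ s) s := (hdiff s).sub_const e2
      have h := hd.inner (𝕜 := ℝ) hd
      have heq : w = fun s => ⟪γ s - e2, γ s - e2⟫ := by
        funext t; rw [hwdef, real_inner_self_eq_norm_sq]
      rw [heq]
      refine h.congr_deriv ?_
      rw [real_inner_comm]; ring
    set g : ℝ → ℝ := fun s => ρ (w s) * (2 * ⟪deriv γ s, γ s - e2⟫) with hgdef
    have hGd : ∀ s, HasDerivAt (fun s => φ (w s)) (g s) s := by
      intro s
      exact (hφd (w s)).comp s (hwd s)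
    have hgcont : Continuous g := by
      apply (hρcont.comp (((hγc.sub continuous_const).norm).pow 2)).mul
      exact continuous_const.mul (hγ'.inner (hγc.sub continuous_const))
    -- pointwise bound : -(g s) ≤ integrand
    have hpt : ∀ s, -(g s) ≤ Real.sqrt ⟪P (γ s) (deriv γ s), deriv γ s⟫ := by
      intro s
      have hns : ‖γ s - e2‖ = Real.sqrt (w s) := by
        rw [hwdef, Real.sqrt_sq (norm_nonneg _)]
      have habs : |⟪deriv γ s, γ s - e2⟫| ≤ ‖deriv γ s‖ * Real.sqrt (w s) := by
        rw [← hns]; exact abs_real_inner_le_norm _ _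
      have h1 : -(g s) ≤ ρ (w s) * (2 * Real.sqrt (w s)) * ‖deriv γ s‖ := by
        have hgs : g s = ρ (w s) * (2 * ⟪deriv γ s, γ s - e2⟫) := rfl
        have ha : ρ (w s) * (-(⟪deriv γ s, γ s - e2⟫)) ≤
            ρ (w s) * |⟪deriv γ s, γ s - e2⟫| :=
          mul_le_mul_of_nonneg_left (neg_le_abs _) (hρ0 _)
        have hb : ρ (w s) * |⟪deriv γ s, γ s - e2⟫| ≤
            ρ (w s) * (‖deriv γ s‖ * Real.sqrt (w s)) :=
          mul_le_mul_of_nonneg_left habs (hρ0 _)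
        have hrw : -(g s) = 2 * (ρ (w s) * (-(⟪deriv γ s, γ s - e2⟫))) := by
          rw [hgs]; ring
        rw [hrw]
        calc 2 * (ρ (w s) * (-(⟪deriv γ s, γ s - e2⟫)))
            ≤ 2 * (ρ (w s) * (‖deriv γ s‖ * Real.sqrt (w s))) := by
              linarith [ha.trans hb]
          _ = ρ (w s) * (2 * Real.sqrt (w s)) * ‖deriv γ s‖ := by ring
      have h2 : ρ (w s) * (2 * Real.sqrt (w s)) * ‖deriv γ s‖ ≤ c * χ (w s) * ‖deriv γ s‖ :=
        mul_le_mul_of_nonneg_right (hρbound (w s)) (norm_nonneg _)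
      refine h1.trans (h2.trans ?_)
      rcases eq_or_ne (χ (w s)) 0 with hz | hz
      · rw [hz, mul_zero, zero_mul]; exact Real.sqrt_nonneg _
      · have hw2 : w s ≤ D ^ 2 := hsupp _ hz
        have hnle : ‖γ s - e2‖ ≤ D := by
          have := Real.sqrt_le_sqrt hw2
          rwa [← hns, Real.sqrt_sq hD0] at this
        have hgs : ‖γ s‖ ≤ R := by
          have h' : ‖γ s‖ ≤ ‖γ s - e2‖ + ‖e2‖ := by
            simpa using norm_add_le (γ s - e2) e2
          rw [hRdef]; linarith
        have hplm : pl R ≤ pl ‖γ s‖ :=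
          hpl (mem_Ici.2 (norm_nonneg _)) (mem_Ici.2 hR0) hgs
        calc c * χ (w s) * ‖deriv γ s‖ ≤ c * 1 * ‖deriv γ s‖ := by
              apply mul_le_mul_of_nonneg_right _ (norm_nonneg _)
              exact mul_le_mul_of_nonneg_left (hχ1 _) hc0
          _ = Real.sqrt (pl R * ‖deriv γ s‖ ^ 2) := by
              rw [mul_one, hcdef, Real.sqrt_mul (hplpos R hR0).le, Real.sqrt_sq (norm_nonneg _)]
          _ ≤ Real.sqrt (pl ‖γ s‖ * ‖deriv γ s‖ ^ 2) := by
              apply Real.sqrt_le_sqrt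
              exact mul_le_mul_of_nonneg_right hplm (sq_nonneg _)
          _ ≤ Real.sqrt ⟪P (γ s) (deriv γ s), deriv γ s⟫ :=
              Real.sqrt_le_sqrt (hPlow _ _)
    -- integrate
    have hginteg : IntervalIntegrable g MeasureTheory.volume 0 1 :=
      hgcont.intervalIntegrable _ _
    have hG : (∫ s in (0:ℝ)..1, g s) = φ (w 1) - φ (w 0) :=
      intervalIntegral.integral_eq_sub_of_hasDerivAt (fun s _ => hGd s) hginteg
    have hmono : (∫ s in (0:ℝ)..1, -(g s)) ≤ pathLength P γ := by
      rw [pathLength]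
      exact intervalIntegral.integral_mono_on (by norm_num) hginteg.neg
        (hIcont.intervalIntegrable _ _) (fun s _ => hpt s)
    have hw1 : w 1 = 0 := by rw [hwdef]; simp [h1]
    have hw0 : w 0 = D ^ 2 := by rw [hwdef]; simp [h0, hDdef]
    have hneg : (∫ s in (0:ℝ)..1, -(g s)) = φ (D ^ 2) := by
      rw [intervalIntegral.integral_neg, hG, hw1, hw0]
      simp [hφdef, intervalIntegral.integral_same]
    -- lower bound on φ (D^2)
    have hord1 : (0:ℝ) ≤ 2 * δ := by linarith
    have hord2 : 2 * δ ≤ D ^ 2 - δ := by linarith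
    have hord3 : D ^ 2 - δ ≤ D ^ 2 := by linarith
    have hmid : (∫ v in (2*δ)..(D ^ 2 - δ), ρ v)
        = c * Real.sqrt (D ^ 2 - δ) - c * Real.sqrt (2 * δ) := by
      have hcongr : ∀ v ∈ uIcc (2*δ) (D ^ 2 - δ), ρ v = c * (1 / (2 * Real.sqrt v)) := by
        intro v hv
        rw [uIcc_of_le hord2] at hv
        have hv1 : 2 * δ ≤ v := hv.1
        have hv2 : v ≤ D ^ 2 - δ := hv.2
        have hmax : max v δ = v := max_eq_left (by linarith)
        rw [hρdef]
        simp only [hχone v hv1 hv2, hmax, mul_one]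
        rw [mul_one_div]
      rw [intervalIntegral.integral_congr hcongr]
      have hderiv : ∀ v ∈ uIcc (2*δ) (D ^ 2 - δ),
          HasDerivAt (fun v => c * Real.sqrt v) (c * (1 / (2 * Real.sqrt v))) v := by
        intro v hv
        rw [uIcc_of_le hord2] at hv
        have : v ≠ 0 := by nlinarith [hv.1]
        exact (Real.hasDerivAt_sqrt this).const_mul c
      have hcont2 : ContinuousOn (fun v => c * (1 / (2 * Real.sqrt v)))
          (uIcc (2*δ) (D ^ 2 - δ)) := by
        rw [uIcc_of_le hord2]
        apply continuousOn_const.mul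
        apply ContinuousOn.div continuousOn_const
        · exact continuousOn_const.mul (Real.continuous_sqrt.continuousOn)
        · intro v hv
          have : (0:ℝ) < v := by nlinarith [hv.1]
          positivity
      rw [intervalIntegral.integral_eq_sub_of_hasDerivAt
        (fun v hv => hderiv v hv) (hcont2.intervalIntegrable)]
    have hsplit : c * Real.sqrt (D ^ 2 - δ) - c * Real.sqrt (2 * δ) ≤ φ (D ^ 2) := by
      have e1' : (∫ v in (0:ℝ)..(2*δ), ρ v) + (∫ v in (2*δ)..(D ^ 2), ρ v) = φ (D ^ 2) :=
        intervalIntegral.integral_add_adjacent_intervals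
          (hρcont.intervalIntegrable _ _) (hρcont.intervalIntegrable _ _)
      have e2' : (∫ v in (2*δ)..(D ^ 2 - δ), ρ v) + (∫ v in (D ^ 2 - δ)..(D ^ 2), ρ v)
          = ∫ v in (2*δ)..(D ^ 2), ρ v :=
        intervalIntegral.integral_add_adjacent_intervals
          (hρcont.intervalIntegrable _ _) (hρcont.intervalIntegrable _ _)
      have p1 : 0 ≤ ∫ v in (0:ℝ)..(2*δ), ρ v :=
        intervalIntegral.integral_nonneg hord1 (fun v _ => hρ0 v)
      have p3 : 0 ≤ ∫ v in (D ^ 2 - δ)..(D ^ 2), ρ v :=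
        intervalIntegral.integral_nonneg hord3 (fun v _ => hρ0 v)
      rw [← hmid]
      linarith [e1', e2']
    calc c * (Real.sqrt (D ^ 2 - δ) - Real.sqrt (2 * δ))
        = c * Real.sqrt (D ^ 2 - δ) - c * Real.sqrt (2 * δ) := by ring
      _ ≤ φ (D ^ 2) := hsplit
      _ = ∫ s in (0:ℝ)..1, -(g s) := hneg.symm
      _ ≤ pathLength P γ := hmono
  -- take the limit δ → 0+
  have hT : Tendsto (fun δ : ℝ => c * (Real.sqrt (D ^ 2 - δ) - Real.sqrt (2 * δ)))
      (𝓝[>] (0:ℝ)) (𝓝 (c * D)) := by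
    have hcont : Continuous (fun δ : ℝ => c * (Real.sqrt (D ^ 2 - δ) - Real.sqrt (2 * δ))) := by
      apply continuous_const.mul
      exact ((continuous_const.sub continuous_id).sqrt).sub
        ((continuous_const.mul continuous_id).sqrt)
    have h := (hcont.tendsto 0).mono_left (nhdsWithin_le_nhds (s := Ioi (0:ℝ)))
    simpa [Real.sqrt_sq hD0] using h
  have hev : ∀ᶠ δ in 𝓝[>] (0:ℝ),
      c * (Real.sqrt (D ^ 2 - δ) - Real.sqrt (2 * δ)) ≤ pathLength P γ := by
    filter_upwards [Ioc_mem_nhdsGT_of_mem (⟨le_refl 0, by positivity⟩ :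
      (0:ℝ) ∈ Ico 0 (D ^ 2 / 3))] with δ hδ
    exact key δ hδ.1 (by linarith [hδ.2])
  exact le_of_tendsto hT hev

/-- If P is a continuous symmetric positive definite metric with
p̲(|e|) I ≤ P(e) ≤ p̄(|e|) I, p̲ positive non-increasing and p̄ non-decreasing,
then √(p̲(|e₁−e₂|+|e₂|)) |e₁−e₂| ≤ d_P(e₁,e₂) ≤ √(p̄(|e₁−e₂|+|e₂|)) |e₁−e₂|. -/
theorem riemannian_distance_bounds
    {n : ℕ}
    (P : Euc n → Euc n →L[ℝ] Euc n) (hP : Continuous P)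
    (hPsa : ∀ e, IsSelfAdjoint (P e))
    (hPpos : ∀ (e v : Euc n), v ≠ 0 → 0 < ⟪P e v, v⟫)
    (pl pu : ℝ → ℝ)
    (hplpos : ∀ s, 0 ≤ s → 0 < pl s)
    (hpl : AntitoneOn pl (Ici 0)) (hpu : MonotoneOn pu (Ici 0))
    (hPbnd : ∀ e v : Euc n,
      pl ‖e‖ * ‖v‖ ^ 2 ≤ ⟪P e v, v⟫ ∧ ⟪P e v, v⟫ ≤ pu ‖e‖ * ‖v‖ ^ 2) :
    ∀ e1 e2 : Euc n,
      Real.sqrt (pl (‖e1 - e2‖ + ‖e2‖)) * ‖e1 - e2‖ ≤ riemDist P e1 e2 ∧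
      riemDist P e1 e2 ≤ Real.sqrt (pu (‖e1 - e2‖ + ‖e2‖)) * ‖e1 - e2‖ := by
  intro e1 e2
  set γL : ℝ → Euc n := fun s : ℝ => e1 + s • (e2 - e1) with hγLdef
  have hγLcd : ContDiff ℝ 1 γL :=
    contDiff_const.add (contDiff_id.smul contDiff_const)
  have hL0 : γL 0 = e1 := by simp [hγLdef]
  have hL1 : γL 1 = e2 := by simp [hγLdef]
  have hmem : pathLength P γL ∈
      {L : ℝ | ∃ γ : ℝ → Euc n, ContDiff ℝ 1 γ ∧ γ 0 = e1 ∧ γ 1 = e2 ∧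
        L = pathLength P γ} := ⟨γL, hγLcd, hL0, hL1, rfl⟩
  have hbdd : BddBelow {L : ℝ | ∃ γ : ℝ → Euc n, ContDiff ℝ 1 γ ∧ γ 0 = e1 ∧ γ 1 = e2 ∧
      L = pathLength P γ} := by
    refine ⟨0, fun L hL => ?_⟩
    obtain ⟨γ, _, _, _, rfl⟩ := hL
    exact pathLength_nonneg P γ
  constructor
  · apply le_csInf ⟨pathLength P γL, hmem⟩
    rintro L ⟨γ, hγ, h0, h1, rfl⟩
    exact path_length_lower P hP pl hplpos hpl (fun e v => (hPbnd e v).1) e1 e2 γ hγ h0 h1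
  · calc riemDist P e1 e2 ≤ pathLength P γL := csInf_le hbdd hmem
      _ ≤ Real.sqrt (pu (‖e1 - e2‖ + ‖e2‖)) * ‖e1 - e2‖ :=
        line_upper P hP hPpos pu hpu (fun e v => (hPbnd e v).2) e1 e2
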